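/- Consider a two-sender instance over a finite field F with parts P_1, P_2, P_{12}, side-information sets K_i, and eavesdropper set A with A_T = A ∩ P_T. Assume every interaction between distinct parts is fully participated: for every T ∈ {1, 2, {1,2}} and every i ∈ P_T, K_i ⊇ [m] \ P_T (each receiver knows all messages lying outside its own part). Suppose for each T there exists a matrix G_T ∈ F^{l_T×|P_T|} that is a valid index code for the sub-instance induced on P_T and weakly secure against A_T. Then there exists a valid weakly secure two-sender linear index code for the full instance of total length max{l_{12} + l_1, l_{12} + l_2, l_1 + l_2}. In particular l* ≤ max{l*_{12} + l*_1, l*_{12} + l*_2, l*_1 + l*_2}. -/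

import Mathlib

open Matrix Sum

attribute [local instance] Classical.propDecidable

noncomputable section

variable (F : Type*) [Field F] [Fintype F]

/-- The row space of a matrix: the span of its rows. -/
def rowSpace {ρ ι : Type*} (G : Matrix ρ ι F) : Submodule F (ι → F) :=
  Submodule.span F (Set.range fun r j => G r j)

/-- Weak security of the linear code `x ↦ G x` against an eavesdropper knowing `x j` for
`j ∈ A`: for every `i ∉ A` and every `u` supported in `A`, `u + e i` is not in the
row space of `G`. -/
def WeaklySecure {ρ ι : Type*} (G : Matrix ρ ι F) (A : Set ι) : Prop :=
  ∀ i ∉ A, ∀ u : ι → F, (∀ j, u j ≠ 0 → j ∈ A) →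
    u + Pi.single i (1 : F) ∉ rowSpace F G

/-- `G` is a valid index code for side-information sets `K`: every receiver `i` can
decode `x i` from the codeword `G.mulVec x` and its side information `x|_{K i}`. -/
def ValidCode {ρ ι : Type*} [Fintype ι] (K : ι → Set ι) (G : Matrix ρ ι F) : Prop :=
  ∀ i : ι, ∃ D : (ρ → F) → (↥(K i) → F) → F,
    ∀ x : ι → F, D (G.mulVec x) (fun j => x j.1) = x i

/-- `G` has two-sender form for the parts `P1`, `P2`: its rows split into sender-1 rows,
zero on all columns in `P2`, and sender-2 rows, zero on all columns in `P1`. -/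
def TwoSenderForm {ρ ι : Type*} (P1 P2 : Set ι) (G : Matrix ρ ι F) : Prop :=
  ∃ S : Set ρ, (∀ r ∈ S, ∀ j ∈ P2, G r j = 0) ∧ (∀ r ∉ S, ∀ j ∈ P1, G r j = 0)

/-- Achievable lengths of valid weakly secure (single-sender) linear index codes. -/
def oneLens {ι : Type*} [Fintype ι] (K : ι → Set ι) (A : Set ι) : Set ℕ :=
  {l | ∃ G : Matrix (Fin l) ι F, ValidCode F K G ∧ WeaklySecure F G A}

/-- Achievable total lengths of valid weakly secure two-sender linear index codes. -/
def twoLens {ι : Type*} [Fintype ι] (P1 P2 : Set ι) (K : ι → Set ι) (A : Set ι) :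
    Set ℕ :=
  {l | ∃ G : Matrix (Fin l) ι F,
      TwoSenderForm F P1 P2 G ∧ ValidCode F K G ∧ WeaklySecure F G A}

/-- Side-information sets of the sub-instance induced on `S`. -/
def subK {ι : Type*} (K : ι → Set ι) (S : Set ι) : ↥S → Set ↥S :=
  fun i => {j : ↥S | (j : ι) ∈ K (i : ι)}

/-- Extend a matrix with columns indexed by `↥S` to one with columns indexed by `ι`,
filling the new columns with zeros. -/
def extendCols {ρ ι : Type*} (S : Set ι) (G : Matrix ρ ↥S F) : Matrix ρ ι F :=
  Matrix.of fun r => Function.extend (Subtype.val) (G r) (fun _ => 0)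

/-- Zero-pad a matrix with `l` rows to one with `L` rows. -/
def padMat {ι : Type*} (L : ℕ) {l : ℕ} (G : Matrix (Fin l) ι F) : Matrix (Fin L) ι F :=
  Matrix.of fun r j => if h : (r : ℕ) < l then G ⟨(r : ℕ), h⟩ j else 0


section CaseIIEHelpers

lemma extendCols_apply_mem {ρ ι : Type*} (S : Set ι) (G : Matrix ρ ↥S F)
    (r : ρ) (j : ↥S) : extendCols F S G r (j : ι) = G r j := by
  simpa [extendCols] using Subtype.val_injective.extend_apply (G r) (fun _ => 0) j

lemma extendCols_apply_not_mem {ρ ι : Type*} (S : Set ι) (G : Matrix ρ ↥S F)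
    (r : ρ) {j : ι} (hj : j ∉ S) : extendCols F S G r j = 0 := by
  have h : ¬ ∃ a : ↥S, (a : ι) = j := by rintro ⟨a, rfl⟩; exact hj a.2
  simpa [extendCols] using Function.extend_apply' (G r) (fun _ => 0) j h

lemma dite_extend_zero {ρ ι : Type*} (S' : Set ι) (GT : Matrix ρ ↥S' F)
    (c : Prop) [Decidable c] (f : c → ρ) {j : ι} (hj : j ∉ S') :
    (if h : c then extendCols F S' GT (f h) j else 0) = 0 := by
  split
  · exact extendCols_apply_not_mem F S' GT _ hj
  · rfl

/-- Vectors supported on `S`. -/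
def suppSub (ι : Type*) (S : Set ι) : Submodule F (ι → F) where
  carrier := {v | ∀ j ∉ S, v j = 0}
  add_mem' := fun ha hb j hj => by simp [ha j hj, hb j hj]
  zero_mem' := fun j hj => rfl
  smul_mem' := fun c a ha j hj => by simp [ha j hj]

lemma rowSpace_extendCols_le {ρ ι : Type*} (S : Set ι) (G : Matrix ρ ↥S F) :
    rowSpace F (extendCols F S G) ≤ suppSub F ι S := by
  rw [rowSpace, Submodule.span_le]
  rintro _ ⟨r, rfl⟩ j hj
  exact extendCols_apply_not_mem F S G r hj

lemma mem_suppSub {ι : Type*} {S : Set ι} {v : ι → F} (h : v ∈ suppSub F ι S) :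
    ∀ j ∉ S, v j = 0 := h

lemma restr_mem_rowSpace {ρ ι : Type*} (S : Set ι) (G : Matrix ρ ↥S F)
    {v : ι → F} (hv : v ∈ rowSpace F (extendCols F S G)) :
    (fun j : ↥S => v (j : ι)) ∈ rowSpace F G := by
  have hmap : Submodule.map (LinearMap.funLeft F F (Subtype.val : ↥S → ι))
      (rowSpace F (extendCols F S G)) ≤ rowSpace F G := by
    rw [rowSpace, Submodule.map_span, Submodule.span_le]
    rintro _ ⟨_, ⟨r, rfl⟩, rfl⟩
    refine Submodule.subset_span ⟨r, ?_⟩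
    funext j
    exact (extendCols_apply_mem F S G r j).symm
  exact hmap ⟨v, hv, rfl⟩

lemma security_aux {ι : Type*} {ρ : Type*} {S : Set ι} (GT : Matrix ρ ↥S F)
    (A : Set ι) (hGTs : WeaklySecure F GT (Subtype.val ⁻¹' A))
    {i : ι} (hi : i ∈ S) (hiA : i ∉ A) {u vT : ι → F}
    (hu : ∀ j, u j ≠ 0 → j ∈ A)
    (hvT : vT ∈ rowSpace F (extendCols F S GT))
    (hv : ∀ j ∈ S, u j + (if j = i then (1 : F) else 0) = vT j) : False := by
  have hr : (fun j : ↥S => vT (j : ι)) ∈ rowSpace F GT := restr_mem_rowSpace F S GT hvT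
  refine absurd ?_ (hGTs ⟨i, hi⟩ hiA (fun j : ↥S => u (j : ι)) (fun j hj => hu j.1 hj))
  convert hr using 2
  rename_i j
  rw [Pi.add_apply, @Pi.single_apply _ (fun a b => Classical.propDecidable (a = b)) _ _
    (⟨i, hi⟩ : ↥S) (1 : F) j, ← hv j j.2]
  congr 1
  by_cases h : (j : ι) = i
  · rw [if_pos h, if_pos (Subtype.ext h)]
  · rw [if_neg h, if_neg (fun hj => h (congrArg Subtype.val hj))]

lemma decode_aux {m L lT : ℕ} {S : Set (Fin m)} (K : Fin m → Set (Fin m))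
    (GT : Matrix (Fin lT) ↥S F) (hGT : ValidCode F (subK K S) GT)
    (G : Matrix (Fin L) (Fin m) F) (e : Fin lT → Fin L)
    (hagree : ∀ t (j : ↥S), G (e t) (j : Fin m) = GT t j)
    (i : Fin m) (hi : i ∈ S) (hside : ∀ j, j ∉ S → j ∈ K i) :
    ∃ D : (Fin L → F) → (↥(K i) → F) → F,
      ∀ x, D (G.mulVec x) (fun j => x j.1) = x i := by
  obtain ⟨D0, hD0⟩ := hGT ⟨i, hi⟩
  refine ⟨fun y s => D0 (fun t => y (e t) -
      ∑ j : Fin m, (if j ∈ S then 0 else G (e t) j * (if h : j ∈ K i then s ⟨j, h⟩ else 0)))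
      (fun j => s ⟨j.1.1, j.2⟩), ?_⟩
  intro x
  have key : (fun t => (G.mulVec x) (e t) -
      ∑ j : Fin m, (if j ∈ S then 0
        else G (e t) j * (if h : j ∈ K i then (fun j' : ↥(K i) => x j'.1) ⟨j, h⟩ else 0)))
      = GT.mulVec (fun j : ↥S => x j.1) := by
    funext t
    have h1 : ∑ j : Fin m, (if j ∈ S then 0
        else G (e t) j * (if h : j ∈ K i then (fun j' : ↥(K i) => x j'.1) ⟨j, h⟩ else 0))
        = ∑ j : Fin m, (if j ∈ S then 0 else G (e t) j * x j) := by
      refine Finset.sum_congr rfl fun j _ => ?_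
      by_cases hj : j ∈ S
      · simp [hj]
      · simp [hj, dif_pos (hside j hj)]
    have h2 : (G.mulVec x) (e t) = ∑ j : Fin m,
        ((if j ∈ S then G (e t) j * x j else 0) + (if j ∈ S then 0 else G (e t) j * x j)) := by
      simp only [Matrix.mulVec, dotProduct]
      refine Finset.sum_congr rfl fun j _ => ?_
      by_cases hj : j ∈ S <;> simp [hj]
    rw [h1, h2, Finset.sum_add_distrib]
    have h3 : ∑ j : Fin m, (if j ∈ S then G (e t) j * x j else 0)
        = ∑ j : ↥S, GT t j * x j.1 := by
      simp only [← hagree]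
      rw [Finset.sum_set_coe (f := fun j => G (e t) j * x j) (s := S)]
      rw [← Finset.univ_inter S.toFinset, ← Finset.sum_ite_mem]
      simp [Set.mem_toFinset]
    rw [h3]
    simp [Matrix.mulVec, dotProduct]
  dsimp only
  rw [key]
  exact hD0 (fun j : ↥S => x j.1)

lemma construct_code {m l1 l2 l12 : ℕ}
    (P1 P2 P12 : Set (Fin m))
    (h12 : Disjoint P1 P2) (h112 : Disjoint P1 P12) (h212 : Disjoint P2 P12)
    (hcov : P1 ∪ P2 ∪ P12 = Set.univ)
    (K : Fin m → Set (Fin m))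
    (hfull1 : ∀ i ∈ P1, ∀ j, j ∉ P1 → j ∈ K i)
    (hfull2 : ∀ i ∈ P2, ∀ j, j ∉ P2 → j ∈ K i)
    (hfull12 : ∀ i ∈ P12, ∀ j, j ∉ P12 → j ∈ K i)
    (A : Set (Fin m))
    (G1 : Matrix (Fin l1) ↥P1 F) (G2 : Matrix (Fin l2) ↥P2 F)
    (G12 : Matrix (Fin l12) ↥P12 F)
    (hG1v : ValidCode F (subK K P1) G1)
    (hG1s : WeaklySecure F G1 (Subtype.val ⁻¹' A))
    (hG2v : ValidCode F (subK K P2) G2)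
    (hG2s : WeaklySecure F G2 (Subtype.val ⁻¹' A))
    (hG12v : ValidCode F (subK K P12) G12)
    (hG12s : WeaklySecure F G12 (Subtype.val ⁻¹' A)) :
    ∃ G : Matrix (Fin (max (l12 + l1) (max (l12 + l2) (l1 + l2)))) (Fin m) F,
        TwoSenderForm F P1 P2 G ∧ ValidCode F K G ∧ WeaklySecure F G A := by
  set L := max (l12 + l1) (max (l12 + l2) (l1 + l2)) with hLdef
  have hl1L : l1 ≤ L := le_trans (by omega) (le_max_left (l12 + l1) _)
  have hl12L : l12 ≤ L := le_trans (by omega) (le_max_left (l12 + l1) _)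
  have hllL : l1 + l2 ≤ L := le_trans (le_max_right _ _) (le_max_right _ _)
  have hP21 : ∀ j ∈ P2, j ∉ P1 := fun j hj => Set.disjoint_right.mp h12 hj
  have hP121 : ∀ j ∈ P12, j ∉ P1 := fun j hj => Set.disjoint_right.mp h112 hj
  have hP12' : ∀ j ∈ P1, j ∉ P2 := fun j hj => Set.disjoint_left.mp h12 hj
  have hP122 : ∀ j ∈ P12, j ∉ P2 := fun j hj => Set.disjoint_right.mp h212 hj
  have hP112 : ∀ j ∈ P1, j ∉ P12 := fun j hj => Set.disjoint_left.mp h112 hj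
  have hP212 : ∀ j ∈ P2, j ∉ P12 := fun j hj => Set.disjoint_left.mp h212 hj
  set G : Matrix (Fin L) (Fin m) F := Matrix.of fun r j =>
    (if h : (r : ℕ) < l1 then extendCols F P1 G1 ⟨r, h⟩ j else 0)
    + (if h : l1 ≤ (r : ℕ) ∧ (r : ℕ) < l1 + l2 then
        extendCols F P2 G2 ⟨(r : ℕ) - l1, by omega⟩ j else 0)
    + (if h : (r : ℕ) < l12 then extendCols F P12 G12 ⟨r, h⟩ j else 0) with hGdef
  have hGapp : ∀ (r : Fin L) (j : Fin m), G r j =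
      (if h : (r : ℕ) < l1 then extendCols F P1 G1 ⟨r, h⟩ j else 0)
      + (if h : l1 ≤ (r : ℕ) ∧ (r : ℕ) < l1 + l2 then
          extendCols F P2 G2 ⟨(r : ℕ) - l1, by omega⟩ j else 0)
      + (if h : (r : ℕ) < l12 then extendCols F P12 G12 ⟨r, h⟩ j else 0) :=
    fun r j => rfl
  refine ⟨G, ?_, ?_, ?_⟩
  · -- two-sender form
    refine ⟨{r : Fin L | ¬(l1 ≤ (r : ℕ) ∧ (r : ℕ) < l1 + l2)}, fun r hr j hj => ?_,
      fun r hr j hj => ?_⟩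
    · rw [hGapp, dif_neg hr, dite_extend_zero F P1 G1 _ _ (hP21 j hj),
        dite_extend_zero F P12 G12 _ _ (hP212 j hj)]
      ring
    · have hr' : l1 ≤ (r : ℕ) ∧ (r : ℕ) < l1 + l2 := by
        by_contra hc; exact hr hc
      rw [hGapp, dif_neg (by omega : ¬ (r : ℕ) < l1),
        dite_extend_zero F P2 G2 _ _ (hP12' j hj),
        dite_extend_zero F P12 G12 _ _ (hP112 j hj)]
      ring
  · -- validity
    intro i
    have hiu : i ∈ P1 ∪ P2 ∪ P12 := by rw [hcov]; trivial
    rcases hiu with (hi | hi) | hi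
    · refine decode_aux F K G1 hG1v G (fun t => ⟨(t : ℕ), lt_of_lt_of_le t.2 hl1L⟩)
        (fun t j => ?_) i hi (fun j hj => hfull1 i hi j hj)
      have ht : (t : ℕ) < l1 := t.2
      rw [hGapp, dif_pos ht, dif_neg (by omega : ¬(l1 ≤ (t : ℕ) ∧ (t : ℕ) < l1 + l2)),
        dite_extend_zero F P12 G12 _ _ (hP112 j.1 j.2)]
      simp [extendCols_apply_mem]
    · refine decode_aux F K G2 hG2v G
        (fun t => ⟨l1 + (t : ℕ), lt_of_lt_of_le (by have := t.2; omega) hllL⟩)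
        (fun t j => ?_) i hi (fun j hj => hfull2 i hi j hj)
      have ht : (t : ℕ) < l2 := t.2
      rw [hGapp, dif_neg (by omega : ¬ l1 + (t : ℕ) < l1),
        dif_pos (show l1 ≤ l1 + (t : ℕ) ∧ l1 + (t : ℕ) < l1 + l2 by omega),
        dite_extend_zero F P12 G12 _ _ (hP212 j.1 j.2)]
      simp [extendCols_apply_mem]
    · refine decode_aux F K G12 hG12v G (fun t => ⟨(t : ℕ), lt_of_lt_of_le t.2 hl12L⟩)
        (fun t j => ?_) i hi (fun j hj => hfull12 i hi j hj)
      have ht : (t : ℕ) < l12 := t.2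
      rw [hGapp, dif_pos ht,
        dite_extend_zero F P1 G1 _ _ (hP121 j.1 j.2),
        dite_extend_zero F P2 G2 _ _ (hP122 j.1 j.2)]
      simp [extendCols_apply_mem]
  · -- security
    intro i hiA u hu hmem
    set rs1 := rowSpace F (extendCols F P1 G1) with hrs1
    set rs2 := rowSpace F (extendCols F P2 G2) with hrs2
    set rs12 := rowSpace F (extendCols F P12 G12) with hrs12
    have hle : rowSpace F G ≤ rs1 ⊔ rs2 ⊔ rs12 := by
      rw [rowSpace, Submodule.span_le]
      rintro _ ⟨r, rfl⟩
      have m1 : (fun j => if h : (r : ℕ) < l1 then extendCols F P1 G1 ⟨r, h⟩ j else 0)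
          ∈ rs1 ⊔ rs2 ⊔ rs12 := by
        by_cases h : (r : ℕ) < l1
        · simp only [dif_pos h]
          exact Submodule.mem_sup_left (Submodule.mem_sup_left
            (Submodule.subset_span ⟨⟨(r : ℕ), h⟩, rfl⟩))
        · simp only [dif_neg h]
          exact Submodule.zero_mem _
      have m2 : (fun j => if h : l1 ≤ (r : ℕ) ∧ (r : ℕ) < l1 + l2 then
          extendCols F P2 G2 ⟨(r : ℕ) - l1, by omega⟩ j else 0) ∈ rs1 ⊔ rs2 ⊔ rs12 := by
        by_cases h : l1 ≤ (r : ℕ) ∧ (r : ℕ) < l1 + l2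
        · simp only [dif_pos h]
          exact Submodule.mem_sup_left (Submodule.mem_sup_right
            (Submodule.subset_span ⟨⟨(r : ℕ) - l1, by omega⟩, rfl⟩))
        · simp only [dif_neg h]
          exact Submodule.zero_mem _
      have m3 : (fun j => if h : (r : ℕ) < l12 then extendCols F P12 G12 ⟨r, h⟩ j else 0)
          ∈ rs1 ⊔ rs2 ⊔ rs12 := by
        by_cases h : (r : ℕ) < l12
        · simp only [dif_pos h]
          exact Submodule.mem_sup_right (Submodule.subset_span ⟨⟨(r : ℕ), h⟩, rfl⟩)
        · simp only [dif_neg h]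
          exact Submodule.zero_mem _
      exact Submodule.add_mem _ (Submodule.add_mem _ m1 m2) m3
    obtain ⟨w, hw, v12, hv12, heq⟩ := Submodule.mem_sup.mp (hle hmem)
    obtain ⟨v1, hv1, v2, hv2, rfl⟩ := Submodule.mem_sup.mp hw
    have hvals : ∀ j, u j +
        (@ite _ (j = i) (Classical.propDecidable _) (1 : F) 0) = v1 j + v2 j + v12 j := by
      intro j
      have hj := congrFun heq j
      simp only [Pi.add_apply] at hj
      rw [@Pi.single_apply _ (fun a b => Classical.propDecidable (a = b)) _ _ i (1 : F) j]
        at hj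
      exact hj.symm
    have hz1 := mem_suppSub F (rowSpace_extendCols_le F P1 G1 hv1)
    have hz2 := mem_suppSub F (rowSpace_extendCols_le F P2 G2 hv2)
    have hz12 := mem_suppSub F (rowSpace_extendCols_le F P12 G12 hv12)
    have hiu : i ∈ P1 ∪ P2 ∪ P12 := by rw [hcov]; trivial
    rcases hiu with (hi | hi) | hi
    · exact security_aux F G1 A hG1s hi hiA hu hv1 (fun j hj => by
        rw [hvals j, hz2 j (hP12' j hj), hz12 j (hP112 j hj)]; ring)
    · exact security_aux F G2 A hG2s hi hiA hu hv2 (fun j hj => by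
        rw [hvals j, hz1 j (hP21 j hj), hz12 j (hP212 j hj)]; ring)
    · exact security_aux F G12 A hG12s hi hiA hu hv12 (fun j hj => by
        rw [hvals j, hz1 j (hP121 j hj), hz2 j (hP122 j hj)]; ring)

end CaseIIEHelpers

/-- Case II-E, Corollary 4 of the paper.  Suppose every interaction
between distinct parts is fully participated (each receiver knows all messages outside
its own part) and valid weakly secure codes of lengths `l1, l2, l12` exist for the three
sub-instances.  Then there is a valid weakly secure two-sender linear index code for the
full instance of total length `max {l12 + l1, l12 + l2, l1 + l2}`; in particular
`l* ≤ max {l*₁₂ + l*₁, l*₁₂ + l*₂, l*₁ + l*₂}`. -/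
theorem caseIIE_exists_code {m l1 l2 l12 : ℕ}
    (P1 P2 P12 : Set (Fin m))
    (h12 : Disjoint P1 P2) (h112 : Disjoint P1 P12) (h212 : Disjoint P2 P12)
    (hcov : P1 ∪ P2 ∪ P12 = Set.univ)
    (K : Fin m → Set (Fin m)) (hK : ∀ i, i ∉ K i)
    (hfull1 : ∀ i ∈ P1, ∀ j, j ∉ P1 → j ∈ K i)
    (hfull2 : ∀ i ∈ P2, ∀ j, j ∉ P2 → j ∈ K i)
    (hfull12 : ∀ i ∈ P12, ∀ j, j ∉ P12 → j ∈ K i)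
    (A : Set (Fin m)) (hA : A ⊂ Set.univ)
    (G1 : Matrix (Fin l1) ↥P1 F) (G2 : Matrix (Fin l2) ↥P2 F)
    (G12 : Matrix (Fin l12) ↥P12 F)
    (hG1v : ValidCode F (subK K P1) G1)
    (hG1s : WeaklySecure F G1 (Subtype.val ⁻¹' A))
    (hG2v : ValidCode F (subK K P2) G2)
    (hG2s : WeaklySecure F G2 (Subtype.val ⁻¹' A))
    (hG12v : ValidCode F (subK K P12) G12)
    (hG12s : WeaklySecure F G12 (Subtype.val ⁻¹' A)) :
    (∃ G : Matrix (Fin (max (l12 + l1) (max (l12 + l2) (l1 + l2)))) (Fin m) F,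
        TwoSenderForm F P1 P2 G ∧ ValidCode F K G ∧ WeaklySecure F G A) ∧
    sInf (twoLens F P1 P2 K A) ≤
      max (sInf (oneLens F (subK K P12) (Subtype.val ⁻¹' A)) +
            sInf (oneLens F (subK K P1) (Subtype.val ⁻¹' A)))
        (max (sInf (oneLens F (subK K P12) (Subtype.val ⁻¹' A)) +
              sInf (oneLens F (subK K P2) (Subtype.val ⁻¹' A)))
          (sInf (oneLens F (subK K P1) (Subtype.val ⁻¹' A)) +
            sInf (oneLens F (subK K P2) (Subtype.val ⁻¹' A)))) := by
  constructor
  · exact construct_code F P1 P2 P12 h12 h112 h212 hcov K hfull1 hfull2 hfull12 A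
      G1 G2 G12 hG1v hG1s hG2v hG2s hG12v hG12s
  · have hne1 : (oneLens F (subK K P1) (Subtype.val ⁻¹' A)).Nonempty :=
      ⟨l1, G1, hG1v, hG1s⟩
    have hne2 : (oneLens F (subK K P2) (Subtype.val ⁻¹' A)).Nonempty :=
      ⟨l2, G2, hG2v, hG2s⟩
    have hne12 : (oneLens F (subK K P12) (Subtype.val ⁻¹' A)).Nonempty :=
      ⟨l12, G12, hG12v, hG12s⟩
    obtain ⟨G1', h1v, h1s⟩ := Nat.sInf_mem hne1
    obtain ⟨G2', h2v, h2s⟩ := Nat.sInf_mem hne2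
    obtain ⟨G12', h12v, h12s⟩ := Nat.sInf_mem hne12
    obtain ⟨G', hform, hval, hsec⟩ := construct_code F P1 P2 P12 h12 h112 h212 hcov K
      hfull1 hfull2 hfull12 A G1' G2' G12' h1v h1s h2v h2s h12v h12s
    exact Nat.sInf_le ⟨G', hform, hval, hsec⟩
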